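/- Fix m_h > 0, L0 > 0, contact points c1, c2 ∈ ℝ, a point q = (q1, q2) ∈ ℝ², and a reference slope σ ∈ ℝ. Let φ_i(q) = −(1/2)(L0 − L_i(q))² with L_i(q) = sqrt((q1 − c_i)² + q2²), and define the 2×2 decoupling matrix A with entries A_{1i} = (1/m_h)(σ ∂φ_i/∂q1 − ∂φ_i/∂q2) and A_{2i} = −(1/m_h) ∂φ_i/∂q1 for i = 1, 2. Then, provided L1(q) > 0 and L2(q) > 0, det A = (L0 − L1(q))(L0 − L2(q)) q2 (c1 − c2) / (m_h² L1(q) L2(q)). Consequently, A is invertible whenever 0 < L_i(q) < L0 for i = 1, 2, q2 ≠ 0, and c1 ≠ c2. -/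

import Mathlib

/-- Leg length `L_i(q) = sqrt((q1 - c_i)^2 + q2^2)`. -/
noncomputable def legLen (c : ℝ) (q : ℝ × ℝ) : ℝ := Real.sqrt ((q.1 - c) ^ 2 + q.2 ^ 2)

/-- Control potential `φ_i(q) = -(1/2)(L0 - L_i(q))^2`. -/
noncomputable def phiPot (c L0 : ℝ) (q : ℝ × ℝ) : ℝ := -(1 / 2) * (L0 - legLen c q) ^ 2

/-- Partial derivative `∂φ_i/∂q1`. -/
noncomputable def dphi1 (c L0 : ℝ) (q : ℝ × ℝ) : ℝ := fderiv ℝ (phiPot c L0) q (1, 0)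

/-- Partial derivative `∂φ_i/∂q2`. -/
noncomputable def dphi2 (c L0 : ℝ) (q : ℝ × ℝ) : ℝ := fderiv ℝ (phiPot c L0) q (0, 1)

/-- The double-support decoupling matrix
`A_{1i} = (1/m_h)(σ ∂φ_i/∂q1 - ∂φ_i/∂q2)`, `A_{2i} = -(1/m_h) ∂φ_i/∂q1`. -/
noncomputable def Amat (mh L0 c1 c2 σ : ℝ) (q : ℝ × ℝ) : Matrix (Fin 2) (Fin 2) ℝ :=
  !![(1 / mh) * (σ * dphi1 c1 L0 q - dphi2 c1 L0 q),
     (1 / mh) * (σ * dphi1 c2 L0 q - dphi2 c2 L0 q);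
     -(1 / mh) * dphi1 c1 L0 q, -(1 / mh) * dphi1 c2 L0 q]

lemma dphi_eval (c L0 : ℝ) (q : ℝ × ℝ) (hL : 0 < legLen c q) (v : ℝ × ℝ) :
    fderiv ℝ (phiPot c L0) q v
      = ((L0 - legLen c q) / legLen c q) * ((q.1 - c) * v.1 + q.2 * v.2) := by
  have hf0 : (q.1 - c) * (q.1 - c) + q.2 * q.2 ≠ 0 := by
    intro h
    rw [legLen, show (q.1 - c) ^ 2 + q.2 ^ 2 = (q.1 - c) * (q.1 - c) + q.2 * q.2 by ring,
      h, Real.sqrt_zero] at hL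
    exact lt_irrefl 0 hL
  have hphi : phiPot c L0 = fun p : ℝ × ℝ =>
      -(1/2) * ((L0 - Real.sqrt ((p.1 - c) * (p.1 - c) + p.2 * p.2)) *
        (L0 - Real.sqrt ((p.1 - c) * (p.1 - c) + p.2 * p.2))) := by
    funext p
    simp only [phiPot, legLen, pow_two]
  have hx : HasFDerivAt (fun p : ℝ × ℝ => p.1 - c) (ContinuousLinearMap.fst ℝ ℝ ℝ) q :=
    hasFDerivAt_fst.sub_const c
  have hy : HasFDerivAt (fun p : ℝ × ℝ => p.2) (ContinuousLinearMap.snd ℝ ℝ ℝ) q :=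
    hasFDerivAt_snd
  have hf := (hx.mul hx).add (hy.mul hy)
  have hs := (Real.hasDerivAt_sqrt hf0).comp_hasFDerivAt q hf
  have hsub := (hasFDerivAt_const L0 q).sub hs
  have hfin := (hsub.mul hsub).const_mul (-(1/2) : ℝ)
  have hfin' : HasFDerivAt (fun p : ℝ × ℝ =>
      -(1/2) * ((L0 - Real.sqrt ((p.1 - c) * (p.1 - c) + p.2 * p.2)) *
        (L0 - Real.sqrt ((p.1 - c) * (p.1 - c) + p.2 * p.2)))) _ q := hfin
  rw [hphi, hfin'.fderiv]
  have hLeq : Real.sqrt ((q.1 - c) * (q.1 - c) + q.2 * q.2) = legLen c q := by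
    rw [legLen]; ring_nf
  have hLne : legLen c q ≠ 0 := ne_of_gt hL
  simp only [ContinuousLinearMap.smul_apply, ContinuousLinearMap.add_apply,
    ContinuousLinearMap.sub_apply, ContinuousLinearMap.zero_apply,
    ContinuousLinearMap.coe_fst', ContinuousLinearMap.coe_snd', smul_eq_mul,
    Function.comp, Pi.sub_apply, Pi.add_apply, Pi.mul_apply, Function.comp_apply, hLeq]
  field_simp
  ring

lemma dphi1_eq (c L0 : ℝ) (q : ℝ × ℝ) (hL : 0 < legLen c q) :
    dphi1 c L0 q = (L0 - legLen c q) * (q.1 - c) / legLen c q := by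
  rw [dphi1, dphi_eval c L0 q hL]; ring

lemma dphi2_eq (c L0 : ℝ) (q : ℝ × ℝ) (hL : 0 < legLen c q) :
    dphi2 c L0 q = (L0 - legLen c q) * q.2 / legLen c q := by
  rw [dphi2, dphi_eval c L0 q hL]; ring

/-- Determinant of the double-support decoupling matrix of the V-SLIP control strategy, and
its invertibility whenever `0 < L_i(q) < L0`, `q2 ≠ 0` and `c1 ≠ c2`. -/
theorem stmt2 (mh L0 c1 c2 σ : ℝ) (q : ℝ × ℝ) (hmh : 0 < mh) (hL0 : 0 < L0)
    (hL1 : 0 < legLen c1 q) (hL2 : 0 < legLen c2 q) :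
    (Amat mh L0 c1 c2 σ q).det
      = (L0 - legLen c1 q) * (L0 - legLen c2 q) * q.2 * (c1 - c2)
          / (mh ^ 2 * legLen c1 q * legLen c2 q) ∧
    (legLen c1 q < L0 → legLen c2 q < L0 → q.2 ≠ 0 → c1 ≠ c2 →
      IsUnit (Amat mh L0 c1 c2 σ q)) := by
  have h1 := ne_of_gt hL1
  have h2 := ne_of_gt hL2
  have hm := ne_of_gt hmh
  have hdet : (Amat mh L0 c1 c2 σ q).det
      = (L0 - legLen c1 q) * (L0 - legLen c2 q) * q.2 * (c1 - c2)
          / (mh ^ 2 * legLen c1 q * legLen c2 q) := by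
    rw [Amat, Matrix.det_fin_two_of, dphi1_eq c1 L0 q hL1, dphi1_eq c2 L0 q hL2,
      dphi2_eq c1 L0 q hL1, dphi2_eq c2 L0 q hL2]
    field_simp
    ring
  refine ⟨hdet, fun hA hB hq hc => ?_⟩
  rw [Matrix.isUnit_iff_isUnit_det, isUnit_iff_ne_zero, hdet]
  apply div_ne_zero
  · exact mul_ne_zero (mul_ne_zero (mul_ne_zero (sub_ne_zero.mpr (ne_of_gt hA))
      (sub_ne_zero.mpr (ne_of_gt hB))) hq) (sub_ne_zero.mpr hc)
  · positivity
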